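/- arXiv:1703.09314 — 9 statements merged into one kernel-verified Lean document; each statement's English description precedes it below -/
import Mathlib

section
/- In RC∇, for all m < n, ◇ₙ(A ∧ ∇ₘB) = ◇ₙA ∧ ◇ₘB, i.e., both implications are derivable. -/
/-- Strictly positive formulas of RC∇: built from ⊤, variables, ∧, ◇ₙ and ∇ₙ. -/
inductive Fm : Type
  | top : Fm
  | var : ℕ → Fm
  | and : Fm → Fm → Fm
  | dia : ℕ → Fm → Fm
  | nab : ℕ → Fm → Fm

/-- Derivability of sequents `A ⊢ B` in RC∇. -/
inductive Prf : Fm → Fm → Prop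
  | refl (A) : Prf A A
  | top (A) : Prf A .top
  | cut {A B C} : Prf A B → Prf B C → Prf A C
  | andL (A B) : Prf (.and A B) A
  | andR (A B) : Prf (.and A B) B
  | andI {A B C} : Prf A B → Prf A C → Prf A (.and B C)
  | diaMono {A B} (n) : Prf A B → Prf (.dia n A) (.dia n B)
  | diaTrans (n A) : Prf (.dia n (.dia n A)) (.dia n A)
  | diaDown {m n} (A) : m < n → Prf (.dia n A) (.dia m A)
  | diaJ {m n} (A B) : m < n →
      Prf (.and (.dia n A) (.dia m B)) (.dia n (.and A (.dia m B)))
  | nabMono {A B} (n) : Prf A B → Prf (.nab n A) (.nab n B)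
  | nabTrans (n A) : Prf (.nab n (.nab n A)) (.nab n A)
  | nabDown {m n} (A) : m < n → Prf (.nab n A) (.nab m A)
  | nabJ {m n} (A B) : m < n →
      Prf (.and (.nab n A) (.nab m B)) (.nab n (.and A (.nab m B)))
  | nabIntro (n A) : Prf A (.nab n A)
  | diaNab (n A) : Prf (.dia n A) (.nab n A)
  | diaNabAbs {m n} (A) : m ≤ n → Prf (.dia m (.nab n A)) (.dia m A)
  | nabDiaAbs {m n} (A) : m ≤ n → Prf (.nab n (.dia m A)) (.dia m A)

/-- In RC∇, for m < n, ◇ₙ(A ∧ ∇ₘB) = ◇ₙA ∧ ◇ₘB. -/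
theorem stmt_2 (m n : ℕ) (hmn : m < n) (A B : Fm) :
    Prf (.dia n (.and A (.nab m B))) (.and (.dia n A) (.dia m B)) ∧
    Prf (.and (.dia n A) (.dia m B)) (.dia n (.and A (.nab m B))) := by
  constructor
  · exact Prf.andI (Prf.diaMono n (Prf.andL _ _))
      (Prf.cut (Prf.cut (Prf.diaMono n (Prf.andR _ _)) (Prf.diaDown _ hmn))
        (Prf.diaNabAbs _ le_rfl))
  · exact Prf.cut (Prf.diaJ A B hmn)
      (Prf.diaMono n (Prf.andI (Prf.andL _ _) (Prf.cut (Prf.andR _ _) (Prf.diaNab _ _))))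
end

section
/- In RC∇, for all m < n, ∇ₙ(A ∧ ◇ₘB) = ∇ₙA ∧ ◇ₘB. -/
/-- In RC∇, for m < n, ∇ₙ(A ∧ ◇ₘB) = ∇ₙA ∧ ◇ₘB. -/
theorem stmt_3 (m n : ℕ) (hmn : m < n) (A B : Fm) :
    Prf (.nab n (.and A (.dia m B))) (.and (.nab n A) (.dia m B)) ∧
    Prf (.and (.nab n A) (.dia m B)) (.nab n (.and A (.dia m B))) := by
  constructor
  · exact .andI (.nabMono n (.andL _ _))
      (.cut (.nabMono n (.andR _ _)) (.nabDiaAbs _ hmn.le))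
  · refine .cut (.andI (.andL _ _) (.cut (.andR _ _) (.nabIntro m (.dia m B)))) ?_
    refine .cut (.nabJ A (.dia m B) hmn) (.nabMono n ?_)
    exact .andI (.andL _ _) (.cut (.andR _ _) (.nabDiaAbs _ le_rfl))
end

section
/- In RC∇, for every index i and formulas A, B: ◇ᵢA ∧ B = ∇ᵢ(◇ᵢA ∧ B) ∧ B and ∇ᵢA ∧ B = ∇ᵢ(∇ᵢA ∧ B) ∧ B. -/
/-- In RC∇: ◇ᵢA ∧ B = ∇ᵢ(◇ᵢA ∧ B) ∧ B and ∇ᵢA ∧ B = ∇ᵢ(∇ᵢA ∧ B) ∧ B. -/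
theorem stmt_4 (i : ℕ) (A B : Fm) :
    (Prf (.and (.dia i A) B) (.and (.nab i (.and (.dia i A) B)) B) ∧
     Prf (.and (.nab i (.and (.dia i A) B)) B) (.and (.dia i A) B)) ∧
    (Prf (.and (.nab i A) B) (.and (.nab i (.and (.nab i A) B)) B) ∧
     Prf (.and (.nab i (.and (.nab i A) B)) B) (.and (.nab i A) B)) := by
  refine ⟨⟨Prf.andI (Prf.nabIntro i _) (Prf.andR _ _), ?_⟩,
    ⟨Prf.andI (Prf.nabIntro i _) (Prf.andR _ _), ?_⟩⟩
  · exact Prf.andI ((Prf.andL _ _).cut (((Prf.nabMono i (Prf.andL _ _)).cut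
      (Prf.nabDiaAbs A le_rfl)))) (Prf.andR _ _)
  · exact Prf.andI ((Prf.andL _ _).cut (((Prf.nabMono i (Prf.andL _ _)).cut
      (Prf.nabTrans i A)))) (Prf.andR _ _)
end

section
/- In RC∇, if A ⊢ ∇ₙB and m < n, then A ∧ ◇ₘC ⊢ ∇ₙ(B ∧ ◇ₘC); moreover if A ⊢ ∇ₙB and B ⊢ ∇ₙC then A ⊢ ∇ₙC, and if A ⊢ ∇ₙB and B ⊢ ◇ₙC then A ⊢ ◇ₙC. -/
/-- In RC∇: (i) if A ⊢ ∇ₙB and m < n then A ∧ ◇ₘC ⊢ ∇ₙ(B ∧ ◇ₘC);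
(ii) if A ⊢ ∇ₙB and B ⊢ ∇ₙC then A ⊢ ∇ₙC;
(iii) if A ⊢ ∇ₙB and B ⊢ ◇ₙC then A ⊢ ◇ₙC. -/
theorem stmt_5 (n : ℕ) :
    (∀ m A B C, m < n → Prf A (.nab n B) →
      Prf (.and A (.dia m C)) (.nab n (.and B (.dia m C)))) ∧
    (∀ A B C, Prf A (.nab n B) → Prf B (.nab n C) → Prf A (.nab n C)) ∧
    (∀ A B C, Prf A (.nab n B) → Prf B (.dia n C) → Prf A (.dia n C)) := by
  refine ⟨?_, ?_, ?_⟩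
  · intro m A B C hmn hAB
    have h1 : Prf (.and A (.dia m C)) (.and (.nab n B) (.nab m (.dia m C))) :=
      .andI (.cut (.andL _ _) hAB) (.cut (.andR _ _) (.nabIntro _ _))
    have h2 := Prf.nabJ B (Fm.dia m C) hmn
    have h3 : Prf (Fm.and B (.nab m (.dia m C))) (.and B (.dia m C)) :=
      .andI (.andL _ _) (.cut (.andR _ _) (.nabDiaAbs _ le_rfl))
    exact .cut h1 (.cut h2 (.nabMono n h3))
  · intro A B C hAB hBC
    exact .cut hAB (.cut (.nabMono n hBC) (.nabTrans n C))
  · intro A B C hAB hBC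
    exact .cut hAB (.cut (.nabMono n hBC) (.nabDiaAbs C le_rfl))
end

section
/- Every strictly positive formula A of RC∇ is equivalent in RC∇ to an ordered formula, i.e., one in which no modality with smaller index occurs within the scope of a modality with larger index. -/
/-- All modality indices occurring in the formula are `≥ n`. -/
def AllGE (n : ℕ) : Fm → Prop
  | .top => True
  | .var _ => True
  | .and A B => AllGE n A ∧ AllGE n B
  | .dia m A => n ≤ m ∧ AllGE n A
  | .nab m A => n ≤ m ∧ AllGE n A

/-- A formula is ordered if no modality with a smaller index occurs within the
scope of a modality with a larger index. -/
def Ordered : Fm → Prop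
  | .top => True
  | .var _ => True
  | .and A B => Ordered A ∧ Ordered B
  | .dia m A => AllGE m A ∧ Ordered A
  | .nab m A => AllGE m A ∧ Ordered A

/-! ### Auxiliary development -/

def Eqv (A B : Fm) : Prop := Prf A B ∧ Prf B A

theorem Prf.pl {A B C : Fm} (h : Prf A C) : Prf (.and A B) C := (Prf.andL A B).cut h
theorem Prf.pr {A B C : Fm} (h : Prf B C) : Prf (.and A B) C := (Prf.andR A B).cut h

theorem Eqv.rfl (A : Fm) : Eqv A A := ⟨.refl A, .refl A⟩
theorem Eqv.symm {A B : Fm} (h : Eqv A B) : Eqv B A := ⟨h.2, h.1⟩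
theorem Eqv.trans {A B C : Fm} (h1 : Eqv A B) (h2 : Eqv B C) : Eqv A C :=
  ⟨h1.1.cut h2.1, h2.2.cut h1.2⟩
theorem Eqv.and2 {A A' B B' : Fm} (h1 : Eqv A A') (h2 : Eqv B B') :
    Eqv (.and A B) (.and A' B') :=
  ⟨.andI (.pl h1.1) (.pr h2.1), .andI (.pl h1.2) (.pr h2.2)⟩
theorem Eqv.dia2 (n : ℕ) {A B : Fm} (h : Eqv A B) : Eqv (.dia n A) (.dia n B) :=
  ⟨.diaMono n h.1, .diaMono n h.2⟩
theorem Eqv.nab2 (n : ℕ) {A B : Fm} (h : Eqv A B) : Eqv (.nab n A) (.nab n B) :=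
  ⟨.nabMono n h.1, .nabMono n h.2⟩

theorem and_top_e (A : Fm) : Eqv (.and A .top) A :=
  ⟨.andL A .top, .andI (.refl A) (.top A)⟩

/-- `P ∧ (E ∧ S) ≡ (P ∧ S) ∧ E` -/
theorem shuffle1 (P E S : Fm) : Eqv (.and P (.and E S)) (.and (.and P S) E) :=
  ⟨.andI (.andI (.pl (.refl P)) (.pr (.pr (.refl S)))) (.pr (.pl (.refl E))),
   .andI (.pl (.pl (.refl P))) (.andI (.pr (.refl E)) (.pl (.pr (.refl S))))⟩

/-- `(a ∧ b) ∧ (c ∧ d) ≡ (a ∧ c) ∧ (b ∧ d)` -/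
theorem shuffle4 (a b c d : Fm) :
    Eqv (.and (.and a b) (.and c d)) (.and (.and a c) (.and b d)) :=
  ⟨.andI (.andI (.pl (.pl (.refl a))) (.pr (.pl (.refl c))))
     (.andI (.pl (.pr (.refl b))) (.pr (.pr (.refl d)))),
   .andI (.andI (.pl (.pl (.refl a))) (.pr (.pl (.refl b))))
     (.andI (.pl (.pr (.refl c))) (.pr (.pr (.refl d))))⟩

/-- `A ∧ (B ∧ C) ≡ (A ∧ B) ∧ C` -/
theorem and_assoc_e (A B C : Fm) : Eqv (.and A (.and B C)) (.and (.and A B) C) :=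
  ⟨.andI (.andI (.pl (.refl A)) (.pr (.pl (.refl B)))) (.pr (.pr (.refl C))),
   .andI (.pl (.pl (.refl A))) (.andI (.pl (.pr (.refl B))) (.pr (.refl C)))⟩

/-! ### Key modal equivalences -/

theorem K1 {m n : ℕ} (h : m < n) (A B : Fm) :
    Eqv (.dia n (.and A (.dia m B))) (.and (.dia n A) (.dia m B)) :=
  ⟨.andI (.diaMono n (.andL A _))
     (((Prf.diaMono n (.andR A _)).cut (.diaDown _ h)).cut (.diaTrans m B)),
   .diaJ A B h⟩

theorem K2 {m n : ℕ} (h : m < n) (A B : Fm) :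
    Eqv (.dia n (.and A (.nab m B))) (.and (.dia n A) (.dia m B)) :=
  ⟨.andI (.diaMono n (.andL A _))
     (((Prf.diaMono n (.andR A _)).cut (.diaDown _ h)).cut (.diaNabAbs B le_rfl)),
   (Prf.diaJ A B h).cut
     (.diaMono n (.andI (.andL A _) ((Prf.andR A _).cut (.diaNab m B))))⟩

theorem K3 {m n : ℕ} (h : m < n) (A B : Fm) :
    Eqv (.nab n (.and A (.dia m B))) (.and (.nab n A) (.dia m B)) :=
  ⟨.andI (.nabMono n (.andL A _))
     ((Prf.nabMono n (.andR A _)).cut (.nabDiaAbs B h.le)),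
   (Prf.andI (.pl (.refl _)) (.pr (.nabIntro m _))).cut
     ((Prf.nabJ A (.dia m B) h).cut
       (.nabMono n (.andI (.andL A _) ((Prf.andR A _).cut (.nabDiaAbs B le_rfl)))))⟩

theorem K4 {m n : ℕ} (h : m < n) (A B : Fm) :
    Eqv (.nab n (.and A (.nab m B))) (.and (.nab n A) (.nab m B)) :=
  ⟨.andI (.nabMono n (.andL A _))
     (((Prf.nabMono n (.andR A _)).cut (.nabDown _ h)).cut (.nabTrans m B)),
   .nabJ A B h⟩

/-! ### Low lists -/

def md (b : Bool) (m : ℕ) (C : Fm) : Fm := if b then .dia m C else .nab m C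

def conL : List (Bool × ℕ × Fm) → Fm
  | [] => .top
  | (b, m, C) :: L => .and (md b m C) (conL L)

def LowList (n : ℕ) (L : List (Bool × ℕ × Fm)) : Prop :=
  ∀ e ∈ L, e.2.1 < n ∧ AllGE e.2.1 e.2.2 ∧ Ordered e.2.2

def toDia (e : Bool × ℕ × Fm) : Bool × ℕ × Fm := (true, e.2.1, e.2.2)

theorem ordered_md {b : Bool} {m : ℕ} {C : Fm} (h1 : AllGE m C) (h2 : Ordered C) :
    Ordered (md b m C) := by
  cases b <;> simp [md, Ordered] <;> exact ⟨h1, h2⟩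

theorem ordered_conL {L : List (Bool × ℕ × Fm)}
    (h : ∀ e ∈ L, AllGE e.2.1 e.2.2 ∧ Ordered e.2.2) : Ordered (conL L) := by
  induction L with
  | nil => trivial
  | cons e L ih =>
      obtain ⟨b, m, C⟩ := e
      exact ⟨ordered_md (h _ (List.mem_cons_self)).1 (h _ (List.mem_cons_self)).2,
        ih fun e he => h e (List.mem_cons_of_mem _ he)⟩

theorem conL_append (L1 L2 : List (Bool × ℕ × Fm)) :
    Eqv (conL (L1 ++ L2)) (.and (conL L1) (conL L2)) := by
  induction L1 with
  | nil => exact ⟨.andI (.top _) (.refl _), .andR _ _⟩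
  | cons e L ih =>
      obtain ⟨b, m, C⟩ := e
      exact ((Eqv.rfl (md b m C)).and2 ih).trans (and_assoc_e _ _ _)

theorem allGE_mono {n m : ℕ} (h : n ≤ m) : ∀ A : Fm, AllGE m A → AllGE n A := by
  intro A
  induction A with
  | top => intro; trivial
  | var => intro; trivial
  | and A B ihA ihB => exact fun hh => ⟨ihA hh.1, ihB hh.2⟩
  | dia k A ih => exact fun hh => ⟨h.trans hh.1, ih hh.2⟩
  | nab k A ih => exact fun hh => ⟨h.trans hh.1, ih hh.2⟩

/-- Splitting an ordered formula into a high part and a low list. -/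
theorem split : ∀ A : Fm, Ordered A → ∀ n : ℕ,
    ∃ P L, AllGE n P ∧ Ordered P ∧ LowList n L ∧ Eqv A (.and P (conL L)) := by
  intro A
  induction A with
  | top =>
      exact fun _ n => ⟨.top, [], trivial, trivial, fun e he => by simp at he,
        ⟨.andI (.refl _) (.top _), .andL _ _⟩⟩
  | var p =>
      exact fun _ n => ⟨.var p, [], trivial, trivial, fun e he => by simp at he,
        ⟨.andI (.refl _) (.top _), .andL _ _⟩⟩
  | and A B ihA ihB =>
      rintro ⟨hA, hB⟩ n
      obtain ⟨PA, LA, h1, h2, h3, h4⟩ := ihA hA n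
      obtain ⟨PB, LB, g1, g2, g3, g4⟩ := ihB hB n
      refine ⟨.and PA PB, LA ++ LB, ⟨h1, g1⟩, ⟨h2, g2⟩,
        fun e he => by rcases List.mem_append.1 he with h | h; exacts [h3 e h, g3 e h], ?_⟩
      exact ((h4.and2 g4).trans (shuffle4 _ _ _ _)).trans
        ((Eqv.rfl _).and2 (conL_append LA LB).symm)
  | dia m A _ =>
      rintro ⟨hge, hord⟩ n
      rcases lt_or_ge m n with hlt | hle
      · refine ⟨.top, [(true, m, A)], trivial, trivial,
          fun e he => by simp at he; subst he; exact ⟨hlt, hge, hord⟩, ?_⟩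
        exact ⟨.andI (.top _) (.andI (.refl _) (.top _)), .pr (.andL _ _)⟩
      · exact ⟨.dia m A, [], ⟨hle, allGE_mono hle A hge⟩, ⟨hge, hord⟩,
          fun e he => by simp at he, ⟨.andI (.refl _) (.top _), .andL _ _⟩⟩
  | nab m A _ =>
      rintro ⟨hge, hord⟩ n
      rcases lt_or_ge m n with hlt | hle
      · refine ⟨.top, [(false, m, A)], trivial, trivial,
          fun e he => by simp at he; subst he; exact ⟨hlt, hge, hord⟩, ?_⟩
        exact ⟨.andI (.top _) (.andI (.refl _) (.top _)), .pr (.andL _ _)⟩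
      · exact ⟨.nab m A, [], ⟨hle, allGE_mono hle A hge⟩, ⟨hge, hord⟩,
          fun e he => by simp at he, ⟨.andI (.refl _) (.top _), .andL _ _⟩⟩

/-- Extracting low conjuncts from under a diamond. -/
theorem extDia (n : ℕ) : ∀ L : List (Bool × ℕ × Fm), LowList n L → ∀ P : Fm,
    Eqv (.dia n (.and P (conL L))) (.and (.dia n P) (conL (L.map toDia))) := by
  intro L
  induction L with
  | nil =>
      intro _ P
      exact (Eqv.dia2 n (and_top_e P)).trans (and_top_e _).symm
  | cons e L ih =>
      intro hlow P
      obtain ⟨b, m, C⟩ := e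
      obtain ⟨hm, hge, hord⟩ := hlow _ (List.mem_cons_self)
      have hrest : LowList n L := fun e he => hlow e (List.mem_cons_of_mem _ he)
      have step : Eqv (.dia n (.and (.and P (conL L)) (md b m C)))
          (.and (.dia n (.and P (conL L))) (.dia m C)) := by
        cases b
        · exact K2 hm _ _
        · exact K1 hm _ _
      show Eqv (.dia n (.and P (.and (md b m C) (conL L))))
        (.and (.dia n P) (.and (.dia m C) (conL (L.map toDia))))
      exact (((Eqv.dia2 n (shuffle1 P (md b m C) (conL L))).trans step).trans
        ((ih hrest P).and2 (Eqv.rfl _))).trans (shuffle1 _ _ _).symm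

/-- Extracting low conjuncts from under a nabla. -/
theorem extNab (n : ℕ) : ∀ L : List (Bool × ℕ × Fm), LowList n L → ∀ P : Fm,
    Eqv (.nab n (.and P (conL L))) (.and (.nab n P) (conL L)) := by
  intro L
  induction L with
  | nil =>
      intro _ P
      exact (Eqv.nab2 n (and_top_e P)).trans (and_top_e _).symm
  | cons e L ih =>
      intro hlow P
      obtain ⟨b, m, C⟩ := e
      obtain ⟨hm, hge, hord⟩ := hlow _ (List.mem_cons_self)
      have hrest : LowList n L := fun e he => hlow e (List.mem_cons_of_mem _ he)
      have step : Eqv (.nab n (.and (.and P (conL L)) (md b m C)))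
          (.and (.nab n (.and P (conL L))) (md b m C)) := by
        cases b
        · exact K4 hm _ _
        · exact K3 hm _ _
      show Eqv (.nab n (.and P (.and (md b m C) (conL L))))
        (.and (.nab n P) (.and (md b m C) (conL L)))
      exact (((Eqv.nab2 n (shuffle1 P (md b m C) (conL L))).trans step).trans
        ((ih hrest P).and2 (Eqv.rfl _))).trans (shuffle1 _ _ _).symm

/-- Every RC∇-formula is equivalent in RC∇ to an ordered one. -/
theorem stmt_6 (A : Fm) : ∃ B : Fm, Ordered B ∧ Prf A B ∧ Prf B A := by
  induction A with
  | top => exact ⟨.top, trivial, .refl _, .refl _⟩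
  | var p => exact ⟨.var p, trivial, .refl _, .refl _⟩
  | and A B ihA ihB =>
      obtain ⟨A', oA, hA1, hA2⟩ := ihA
      obtain ⟨B', oB, hB1, hB2⟩ := ihB
      exact ⟨.and A' B', ⟨oA, oB⟩, .andI (.pl hA1) (.pr hB1), .andI (.pl hA2) (.pr hB2)⟩
  | dia n A ih =>
      obtain ⟨A', oA, hA1, hA2⟩ := ih
      obtain ⟨P, L, h1, h2, h3, h4⟩ := split A' oA n
      have e : Eqv (.dia n A) (.and (.dia n P) (conL (L.map toDia))) :=
        ((Eqv.dia2 n (⟨hA1, hA2⟩ : Eqv A A')).trans (Eqv.dia2 n h4)).trans (extDia n L h3 P)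
      refine ⟨.and (.dia n P) (conL (L.map toDia)), ⟨⟨h1, h2⟩, ordered_conL ?_⟩, e.1, e.2⟩
      intro e' he'
      obtain ⟨f, hf, rfl⟩ := List.mem_map.1 he'
      exact ⟨(h3 f hf).2.1, (h3 f hf).2.2⟩
  | nab n A ih =>
      obtain ⟨A', oA, hA1, hA2⟩ := ih
      obtain ⟨P, L, h1, h2, h3, h4⟩ := split A' oA n
      have e : Eqv (.nab n A) (.and (.nab n P) (conL L)) :=
        ((Eqv.nab2 n (⟨hA1, hA2⟩ : Eqv A A')).trans (Eqv.nab2 n h4)).trans (extNab n L h3 P)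
      exact ⟨.and (.nab n P) (conL L),
        ⟨⟨h1, h2⟩, ordered_conL fun f hf => ⟨(h3 f hf).2.1, (h3 f hf).2.2⟩⟩, e.1, e.2⟩
end

section
/- Assume that for every variable-free RC∇-formula A, A does not prove ◇ₙA (irreflexivity). Then for all variable-free RC∇-formulas A, B in the signature restricted to indices ≥ n: ◇ₙA ⊢ ◇ₙB if and only if A ⊢ ∇ₙB. -/
/-- The formula contains no propositional variables. -/
def VarFree : Fm → Prop
  | .top => True
  | .var _ => False
  | .and A B => VarFree A ∧ VarFree B
  | .dia _ A => VarFree A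
  | .nab _ A => VarFree A

/-- Assuming irreflexivity and linearity, for variable-free A, B over indices ≥ n:
◇ₙA ⊢ ◇ₙB iff A ⊢ ∇ₙB. -/
theorem stmt_7 (n : ℕ)
    (irr : ∀ (A : Fm) (m : ℕ), VarFree A → ¬ Prf A (.dia m A))
    (lin : ∀ A B : Fm, VarFree A → AllGE n A → VarFree B → AllGE n B →
      Prf A (.dia n B) ∨ Prf B (.dia n A) ∨
        (Prf (.nab n A) (.nab n B) ∧ Prf (.nab n B) (.nab n A))) :
    ∀ A B : Fm, VarFree A → AllGE n A → VarFree B → AllGE n B →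
      (Prf (.dia n A) (.dia n B) ↔ Prf A (.nab n B)) := by
  intro A B vA gA vB gB
  constructor
  · intro h
    rcases lin A B vA gA vB gB with h1 | h2 | ⟨h3, _⟩
    · exact h1.cut (Prf.diaNab n B)
    · exact absurd (h2.cut h) (irr B n vB)
    · exact (Prf.nabIntro n A).cut h3
  · intro h
    exact (Prf.diaMono n h).cut (Prf.diaNabAbs B le_rfl)
end

section
/- For every formula A of RC, A ⊬_RC ◇₀A; i.e., the relation <₀ defined by A <₀ B iff B ⊢_RC ◇₀A is irreflexive. -/
/-- Strictly positive formulas of the reflection calculus RC. -/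
inductive RCFormula : Type
  | top : RCFormula
  | var : ℕ → RCFormula
  | and : RCFormula → RCFormula → RCFormula
  | dia : ℕ → RCFormula → RCFormula

/-- Derivability of sequents `A ⊢ B` in RC. -/
inductive RCPrf : RCFormula → RCFormula → Prop
  | refl (A) : RCPrf A A
  | top (A) : RCPrf A .top
  | cut {A B C} : RCPrf A B → RCPrf B C → RCPrf A C
  | andL (A B) : RCPrf (.and A B) A
  | andR (A B) : RCPrf (.and A B) B
  | andI {A B C} : RCPrf A B → RCPrf A C → RCPrf A (.and B C)
  | mono {A B} (n) : RCPrf A B → RCPrf (.dia n A) (.dia n B)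
  | trans (n A) : RCPrf (.dia n (.dia n A)) (.dia n A)
  | down {m n} (A) : m < n → RCPrf (.dia n A) (.dia m A)
  | J {m n} (A B) : m < n →
      RCPrf (.and (.dia n A) (.dia m B)) (.dia n (.and A (.dia m B)))

namespace RCIrr

open Ordinal Order

/-- We work with ordinals in universe 0. -/
abbrev Ord : Type 1 := Ordinal.{0}

/-- `ε₀`, the least fixed point of `ω ^ ·`. -/
noncomputable def E : Ord := nfp (fun a => omega0 ^ a) 0

theorem E_fix : omega0 ^ E = E := nfp_fp (isNormal_opow one_lt_omega0) 0

theorem E_pos : 0 < E := by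
  rw [← E_fix]; exact opow_pos _ omega0_pos

def kkSet (f γ : Ord) : Set Ord := {c | 1 ≤ c ∧ f ≤ omega0 ^ γ * c}

theorem kkSet_ne (f γ : Ord) : (kkSet f γ).Nonempty := by
  refine ⟨f + 1, ?_, ?_⟩
  · exact le_add_self
  · calc f ≤ f + 1 := le_self_add
      _ = 1 * (f + 1) := (one_mul _).symm
      _ ≤ omega0 ^ γ * (f + 1) :=
        mul_le_mul_left (Order.one_le_iff_pos.2 (opow_pos _ omega0_pos)) _

/-- the least `c ≥ 1` with `f ≤ ω^γ * c`. -/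
noncomputable def kk (f γ : Ord) : Ord :=
  Ordinal.lt_wf.min (kkSet f γ) (kkSet_ne f γ)

theorem kk_mem (f γ : Ord) :
    1 ≤ kk f γ ∧ f ≤ omega0 ^ γ * kk f γ :=
  Ordinal.lt_wf.min_mem (kkSet f γ) (kkSet_ne f γ)

theorem kk_le {f γ c : Ord} (h1 : 1 ≤ c) (h2 : f ≤ omega0 ^ γ * c) :
    kk f γ ≤ c :=
  not_lt.1 (Ordinal.lt_wf.not_lt_min (kkSet f γ) (show c ∈ kkSet f γ from ⟨h1, h2⟩))

theorem kk_zero (γ : Ord) : kk 0 γ = 1 :=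
  le_antisymm (kk_le le_rfl (zero_le)) (kk_mem 0 γ).1

theorem kk_succ {f γ s : Ord} (hf : f = s + 1) : ∃ t, kk f γ = t + 1 := by
  rcases zero_or_succ_or_isSuccLimit (kk f γ) with h0 | ⟨a, ha⟩ | hlim
  · exfalso; have := (kk_mem f γ).1; rw [h0] at this; exact absurd this (by norm_num)
  · exact ⟨a, by rw [← ha, add_one_eq_succ]⟩
  · exfalso
    have hfs : f < omega0 ^ γ * kk f γ := by
      rcases lt_or_eq_of_le (kk_mem f γ).2 with h | h
      · exact h
      · exfalso
        have hl : IsSuccLimit f := by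
          rw [h]; exact isSuccLimit_mul_right (opow_pos _ omega0_pos) hlim
        have : succ s < f := hl.succ_lt (by rw [hf, add_one_eq_succ]; exact lt_succ s)
        rw [hf, add_one_eq_succ] at this; exact absurd this (lt_irrefl _)
    obtain ⟨c', hc', hfc⟩ := (lt_mul_iff_of_isSuccLimit hlim).1 hfs
    have h1k : 1 < kk f γ := by simpa using hlim.succ_lt hlim.bot_lt
    have : kk f γ ≤ max c' 1 := by
      refine kk_le (le_max_right _ _) ?_
      exact le_trans hfc.le (mul_le_mul_right (le_max_left _ _) _)
    exact absurd (lt_of_le_of_lt this (max_lt hc' h1k)) (lt_irrefl _)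

/-- downward tower closure, with fuel. -/
noncomputable def gg (φ : ℕ → Ord) : ℕ → ℕ → Ord
  | 0, _ => E
  | d + 1, j => omega0 ^ gg φ d (j + 1) * kk (φ j) (gg φ d (j + 1))

/-- `gOf φ K j`: the `j`-th coordinate of the least "world" dominating `φ`
(assuming `φ` vanishes from `K` on). -/
noncomputable def gOf (φ : ℕ → Ord) (K j : ℕ) : Ord := gg φ (K - j) j

theorem gOf_anchor {φ : ℕ → Ord} {K j : ℕ} (h : K ≤ j) : gOf φ K j = E := by
  unfold gOf; rw [Nat.sub_eq_zero_of_le h]; rfl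

theorem gOf_unfold {φ : ℕ → Ord} {K j : ℕ} (h : j < K) :
    gOf φ K j = omega0 ^ gOf φ K (j + 1) * kk (φ j) (gOf φ K (j + 1)) := by
  unfold gOf
  have hK : K - j = (K - (j + 1)) + 1 := by omega
  rw [hK]; rfl

theorem E_le_gg (φ : ℕ → Ord) : ∀ d j, E ≤ gg φ d j := by
  intro d
  induction d with
  | zero => intro j; exact le_rfl
  | succ d ih =>
    intro j
    calc E = omega0 ^ E := E_fix.symm
      _ ≤ omega0 ^ gg φ d (j + 1) := opow_le_opow_right omega0_pos (ih (j + 1))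
      _ = omega0 ^ gg φ d (j + 1) * 1 := (mul_one _).symm
      _ ≤ omega0 ^ gg φ d (j + 1) * kk (φ j) (gg φ d (j + 1)) :=
        mul_le_mul_right (kk_mem _ _).1 _

theorem E_le_gOf (φ : ℕ → Ord) (K j : ℕ) : E ≤ gOf φ K j := E_le_gg φ _ j

theorem gOf_world (φ : ℕ → Ord) (K j : ℕ) :
    ∃ q, 1 ≤ q ∧ gOf φ K j = omega0 ^ gOf φ K (j + 1) * q := by
  by_cases h : j < K
  · exact ⟨kk (φ j) (gOf φ K (j + 1)), (kk_mem _ _).1, gOf_unfold h⟩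
  · refine ⟨1, le_rfl, ?_⟩
    rw [gOf_anchor (le_of_not_gt h), gOf_anchor (by omega), mul_one, E_fix]

theorem gOf_ge {φ : ℕ → Ord} {K : ℕ} (hsupp : ∀ i, K ≤ i → φ i = 0) (j : ℕ) :
    φ j ≤ gOf φ K j := by
  by_cases h : j < K
  · rw [gOf_unfold h]; exact (kk_mem _ _).2
  · rw [hsupp j (le_of_not_gt h)]; exact zero_le

theorem gOf_min {φ : ℕ → Ord} {K : ℕ} (v : ℕ → Ord)
    (hE : ∀ n, E ≤ v n)
    (hdiv : ∀ n, ∃ q, 1 ≤ q ∧ v n = omega0 ^ v (n + 1) * q)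
    (hv : ∀ i, φ i ≤ v i) : ∀ j, gOf φ K j ≤ v j := by
  suffices h : ∀ d j, K ≤ j + d → gOf φ K j ≤ v j by
    intro j; exact h K j (by omega)
  intro d
  induction d with
  | zero =>
    intro j hj
    rw [gOf_anchor (by omega)]; exact hE j
  | succ d ih =>
    intro j hj
    by_cases hjK : K ≤ j
    · rw [gOf_anchor hjK]; exact hE j
    · have hjK' : j < K := lt_of_not_ge hjK
      have hγ : gOf φ K (j + 1) ≤ v (j + 1) := ih (j + 1) (by omega)
      obtain ⟨q, hq1, hq⟩ := hdiv j
      have hr : gOf φ K (j + 1) + (v (j + 1) - gOf φ K (j + 1)) = v (j + 1) :=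
        Ordinal.add_sub_cancel_of_le hγ
      have hvj : v j = omega0 ^ gOf φ K (j + 1) *
          (omega0 ^ (v (j + 1) - gOf φ K (j + 1)) * q) := by
        rw [← mul_assoc, ← opow_add, hr, hq]
      rw [gOf_unfold hjK', hvj]
      refine mul_le_mul_right (kk_le ?_ ?_) _
      · exact Order.one_le_iff_pos.2
          (mul_pos (opow_pos _ omega0_pos) (lt_of_lt_of_le zero_lt_one hq1))
      · rw [← hvj]; exact hv j

theorem gOf_pad {φ : ℕ → Ord} {K K' : ℕ} (hsupp : ∀ i, K ≤ i → φ i = 0)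
    (hKK' : K ≤ K') : ∀ j, gOf φ K' j = gOf φ K j := by
  suffices h : ∀ d j, K' ≤ j + d → gOf φ K' j = gOf φ K j by
    intro j; exact h K' j (by omega)
  intro d
  induction d with
  | zero =>
    intro j hj
    rw [gOf_anchor (by omega), gOf_anchor (by omega)]
  | succ d ih =>
    intro j hj
    by_cases hjK' : K' ≤ j
    · rw [gOf_anchor hjK', gOf_anchor (le_trans hKK' hjK')]
    · have hj1 : j < K' := lt_of_not_ge hjK'
      have ihe : gOf φ K' (j + 1) = gOf φ K (j + 1) := ih (j + 1) (by omega)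
      rw [gOf_unfold hj1, ihe]
      by_cases hjK : j < K
      · rw [gOf_unfold hjK]
      · rw [hsupp j (le_of_not_gt hjK), kk_zero, mul_one,
          gOf_anchor (le_of_not_gt hjK), gOf_anchor (by omega), E_fix]

theorem gOf_agree {φ ψ : ℕ → Ord} {K n : ℕ} (h : ∀ i, n ≤ i → φ i = ψ i) :
    ∀ j, n ≤ j → gOf φ K j = gOf ψ K j := by
  suffices hs : ∀ d j, n ≤ j → K ≤ j + d → gOf φ K j = gOf ψ K j by
    intro j hj; exact hs K j hj (by omega)
  intro d
  induction d with
  | zero =>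
    intro j hj hjK
    rw [gOf_anchor (by omega), gOf_anchor (by omega)]
  | succ d ih =>
    intro j hj hjK
    by_cases hK : K ≤ j
    · rw [gOf_anchor hK, gOf_anchor hK]
    · have hjK' : j < K := lt_of_not_ge hK
      rw [gOf_unfold hjK', gOf_unfold hjK', ih (j + 1) (by omega) (by omega), h j hj]

/-- the largest modality index + 1 occurring in a formula. -/
def maxIdx : RCFormula → ℕ
  | .top => 0
  | .var _ => 0
  | .and A B => max (maxIdx A) (maxIdx B)
  | .dia n A => max (n + 1) (maxIdx A)

/-- the requirement vector of a formula. -/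
noncomputable def fV : RCFormula → ℕ → Ord
  | .top => fun _ => 0
  | .var _ => fun _ => 0
  | .and A B => fun i => max (fV A i) (fV B i)
  | .dia n A => fun i =>
      if i < n then fV A i else if i = n then gOf (fV A) (maxIdx A) n + 1 else 0

theorem fV_supp : ∀ (A : RCFormula) (i : ℕ), maxIdx A ≤ i → fV A i = 0 := by
  intro A
  induction A with
  | top => intro i _; rfl
  | var p => intro i _; rfl
  | and A B ihA ihB =>
    intro i hi
    simp only [fV, maxIdx] at *
    rw [ihA i (by omega), ihB i (by omega)]; simp
  | dia n A ihA =>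
    intro i hi
    simp only [fV, maxIdx] at *
    rw [if_neg (by omega), if_neg (by omega)]

theorem fV_succ : ∀ (A : RCFormula) (i : ℕ), fV A i = 0 ∨ ∃ s, fV A i = s + 1 := by
  intro A
  induction A with
  | top => intro i; exact Or.inl rfl
  | var p => intro i; exact Or.inl rfl
  | and A B ihA ihB =>
    intro i
    rcases le_total (fV A i) (fV B i) with h | h
    · rcases ihB i with h0 | ⟨s, hs⟩
      · exact Or.inl (by show max (fV A i) (fV B i) = 0; rw [max_eq_right h, h0])
      · exact Or.inr ⟨s, by show max (fV A i) (fV B i) = s + 1; rw [max_eq_right h, hs]⟩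
    · rcases ihA i with h0 | ⟨s, hs⟩
      · exact Or.inl (by show max (fV A i) (fV B i) = 0; rw [max_eq_left h, h0])
      · exact Or.inr ⟨s, by show max (fV A i) (fV B i) = s + 1; rw [max_eq_left h, hs]⟩
  | dia n A ihA =>
    intro i
    by_cases h1 : i < n
    · rcases ihA i with h0 | ⟨s, hs⟩
      · exact Or.inl (by
          show (if i < n then fV A i else if i = n then gOf (fV A) (maxIdx A) n + 1 else 0) = 0
          rw [if_pos h1, h0])
      · exact Or.inr ⟨s, by
          show (if i < n then fV A i else if i = n then gOf (fV A) (maxIdx A) n + 1 else 0) = s + 1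
          rw [if_pos h1, hs]⟩
    · by_cases h2 : i = n
      · refine Or.inr ⟨gOf (fV A) (maxIdx A) n, ?_⟩
        show (if i < n then fV A i else if i = n then gOf (fV A) (maxIdx A) n + 1 else 0) = _
        rw [if_neg h1, if_pos h2]
      · refine Or.inl ?_
        show (if i < n then fV A i else if i = n then gOf (fV A) (maxIdx A) n + 1 else 0) = 0
        rw [if_neg h1, if_neg h2]

/-- Worlds of the (Ignatiev-style) model. -/
structure W where
  c : ℕ → Ord
  hE : ∀ n, E ≤ c n
  hdiv : ∀ n, ∃ q, 1 ≤ q ∧ c n = omega0 ^ c (n + 1) * q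

/-- forcing (with the all-true valuation). -/
def Sat : RCFormula → W → Prop
  | .top, _ => True
  | .var _, _ => True
  | .and A B, x => Sat A x ∧ Sat B x
  | .dia n A, x => ∃ v : W, (∀ i, i < n → v.c i = x.c i) ∧ v.c n < x.c n ∧ Sat A v

/-- the minimal world satisfying a formula. -/
noncomputable def gW (A : RCFormula) : W where
  c := gOf (fV A) (maxIdx A)
  hE := E_le_gOf _ _
  hdiv := gOf_world _ _

/-- Characterization of forcing: `x ⊩ A` iff `x` dominates the requirement vector. -/
theorem char : ∀ (A : RCFormula) (x : W), Sat A x ↔ ∀ j, fV A j ≤ x.c j := by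
  intro A
  induction A with
  | top =>
    intro x
    simp only [Sat, fV]
    exact ⟨fun _ j => zero_le, fun _ => trivial⟩
  | var p =>
    intro x
    simp only [Sat, fV]
    exact ⟨fun _ j => zero_le, fun _ => trivial⟩
  | and A B ihA ihB =>
    intro x
    constructor
    · rintro ⟨hA, hB⟩ j
      exact max_le (((ihA x).1 hA) j) (((ihB x).1 hB) j)
    · intro h
      exact ⟨(ihA x).2 fun j => le_trans (le_max_left _ _) (h j),
             (ihB x).2 fun j => le_trans (le_max_right _ _) (h j)⟩
  | dia n A ihA =>
    intro x
    constructor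
    · rintro ⟨v, hlow, hlt, hv⟩ j
      have hvf : ∀ i, fV A i ≤ v.c i := (ihA v).1 hv
      have hvg : ∀ i, gOf (fV A) (maxIdx A) i ≤ v.c i := gOf_min v.c v.hE v.hdiv hvf
      show (if j < n then fV A j else if j = n then gOf (fV A) (maxIdx A) n + 1 else 0) ≤ x.c j
      by_cases hj : j < n
      · rw [if_pos hj, ← hlow j hj]; exact hvf j
      · by_cases hj' : j = n
        · rw [if_neg hj, if_pos hj', add_one_eq_succ, succ_le_iff]
          subst hj'
          exact lt_of_le_of_lt (hvg j) hlt
        · rw [if_neg hj, if_neg hj']; exact zero_le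
    · intro h
      set K := maxIdx A with hK
      -- construct the witness world
      have hn : gOf (fV A) K n + 1 ≤ x.c n := by
        have := h n
        simpa only [fV, if_neg (lt_irrefl n), if_pos rfl, if_true] using this
      refine ⟨⟨fun j => if j < n then x.c j else gOf (fV A) K j, ?_, ?_⟩, ?_, ?_, ?_⟩
      · intro j
        show E ≤ if j < n then x.c j else gOf (fV A) K j
        by_cases hj : j < n
        · rw [if_pos hj]; exact x.hE j
        · rw [if_neg hj]; exact E_le_gOf _ _ _
      · intro j
        show ∃ q, 1 ≤ q ∧ (if j < n then x.c j else gOf (fV A) K j)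
            = omega0 ^ (if j + 1 < n then x.c (j + 1) else gOf (fV A) K (j + 1)) * q
        by_cases hj1 : j + 1 < n
        · have hj : j < n := by omega
          rw [if_pos hj, if_pos hj1]
          exact x.hdiv j
        · by_cases hj2 : j + 1 = n
          · have hj : j < n := by omega
            rw [if_pos hj, if_neg hj1]
            obtain ⟨q0, hq0, hq⟩ := x.hdiv j
            have hle : gOf (fV A) K (j + 1) ≤ x.c (j + 1) := by
              rw [hj2]
              exact le_trans (le_self_add) hn
            have hr : gOf (fV A) K (j + 1) + (x.c (j + 1) - gOf (fV A) K (j + 1))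
                = x.c (j + 1) := Ordinal.add_sub_cancel_of_le hle
            refine ⟨omega0 ^ (x.c (j + 1) - gOf (fV A) K (j + 1)) * q0, ?_, ?_⟩
            · exact Order.one_le_iff_pos.2
                (mul_pos (opow_pos _ omega0_pos) (lt_of_lt_of_le zero_lt_one hq0))
            · rw [← mul_assoc, ← opow_add, hr, hq]
          · have hj : ¬ j < n := by omega
            rw [if_neg hj, if_neg hj1]
            exact gOf_world _ _ _
      · intro i hi
        show (if i < n then x.c i else gOf (fV A) K i) = x.c i
        rw [if_pos hi]
      · show (if n < n then x.c n else gOf (fV A) K n) < x.c n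
        rw [if_neg (lt_irrefl n)]
        rw [add_one_eq_succ, succ_le_iff] at hn
        exact hn
      · refine (ihA _).2 ?_
        intro i
        show fV A i ≤ if i < n then x.c i else gOf (fV A) K i
        by_cases hi : i < n
        · rw [if_pos hi]
          have := h i
          simpa only [fV, if_pos hi] using this
        · rw [if_neg hi]
          exact gOf_ge (fV_supp A) i

/-- the `n`-th coordinate of `g` only depends on the requirement vector from `n` on. -/
theorem g_eq_of_agree {A C : RCFormula} {n : ℕ} (h : ∀ i, n ≤ i → fV C i = fV A i) :
    gOf (fV C) (maxIdx C) n = gOf (fV A) (maxIdx A) n := by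
  set M := max (maxIdx C) (maxIdx A) with hM
  calc gOf (fV C) (maxIdx C) n
      = gOf (fV C) M n := (gOf_pad (fV_supp C) (le_max_left _ _) n).symm
    _ = gOf (fV A) M n := gOf_agree h n le_rfl
    _ = gOf (fV A) (maxIdx A) n := gOf_pad (fV_supp A) (le_max_right _ _) n

/-- Soundness of `down` at the vector level: climbing down the tower. -/
theorem down_chain {A : RCFormula} {n : ℕ} (x : W)
    (H1 : ∀ i, i < n → fV A i ≤ x.c i)
    (H2 : gOf (fV A) (maxIdx A) n + 1 ≤ x.c n) :
    ∀ d j, j + d = n → gOf (fV A) (maxIdx A) j + 1 ≤ x.c j := by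
  set K := maxIdx A with hK
  intro d
  induction d with
  | zero =>
    intro j hj
    have : j = n := by omega
    subst this; exact H2
  | succ d ih =>
    intro j hj
    have hjn : j < n := by omega
    have hIH : gOf (fV A) K (j + 1) + 1 ≤ x.c (j + 1) := ih (j + 1) (by omega)
    set γ := gOf (fV A) K (j + 1) with hγ
    obtain ⟨q, hq1, hq⟩ := x.hdiv j
    have hr : (γ + 1) + (x.c (j + 1) - (γ + 1)) = x.c (j + 1) :=
      Ordinal.add_sub_cancel_of_le hIH
    set c0 := omega0 ^ (x.c (j + 1) - (γ + 1)) * q with hc0def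
    have hc0 : 1 ≤ c0 :=
      Order.one_le_iff_pos.2
        (mul_pos (opow_pos _ omega0_pos) (lt_of_lt_of_le zero_lt_one hq1))
    have hxj : x.c j = omega0 ^ γ * (omega0 * c0) := by
      rw [hq, ← hr, opow_add, opow_add, opow_one, hc0def, ← mul_assoc, ← mul_assoc]
    have hωc0 : omega0 ≤ omega0 * c0 := by
      calc omega0 = omega0 * 1 := (mul_one _).symm
        _ ≤ omega0 * c0 := mul_le_mul_right hc0 _
    have hωc1 : (1 : Ord) ≤ omega0 * c0 := le_trans one_lt_omega0.le hωc0
    rw [add_one_eq_succ, succ_le_iff]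
    by_cases hjK : j < K
    · rw [gOf_unfold hjK, ← hγ, hxj, mul_lt_mul_iff_of_pos_left (opow_pos _ omega0_pos)]
      rcases fV_succ A j with h0 | ⟨s, hs⟩
      · rw [h0, kk_zero]
        exact lt_of_lt_of_le one_lt_omega0 hωc0
      · obtain ⟨t, ht⟩ := kk_succ hs
        rw [ht]
        have hle2 : t + 1 ≤ omega0 * c0 := by
          rw [← ht]
          refine kk_le hωc1 ?_
          rw [← hxj]; exact H1 j hjn
        rcases lt_or_eq_of_le hle2 with h | h
        · exact h
        · exfalso
          have hlim : IsSuccLimit (omega0 * c0) :=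
            isSuccLimit_mul_left isSuccLimit_omega0 (lt_of_lt_of_le zero_lt_one hc0)
          rw [← h] at hlim
          have : succ t < t + 1 := hlim.succ_lt (by rw [add_one_eq_succ]; exact lt_succ t)
          rw [add_one_eq_succ] at this
          exact absurd this (lt_irrefl _)
    · rw [gOf_anchor (le_of_not_gt hjK)]
      have h1 : E ≤ γ := E_le_gOf _ _ _
      have h2 : omega0 ^ E * omega0 ≤ x.c j := by
        rw [hxj]
        exact mul_le_mul' (opow_le_opow_right omega0_pos h1) hωc0
      rw [E_fix] at h2
      refine lt_of_lt_of_le ?_ h2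
      have : E * 1 < E * omega0 := (mul_lt_mul_iff_of_pos_left E_pos).2 one_lt_omega0
      simpa using this

/-- Soundness of RC for this model. -/
theorem sound {A B : RCFormula} (h : RCPrf A B) : ∀ x : W, Sat A x → Sat B x := by
  induction h with
  | refl A => exact fun x hx => hx
  | top A => exact fun x _ => trivial
  | cut h1 h2 ih1 ih2 => exact fun x hx => ih2 x (ih1 x hx)
  | andL A B => exact fun x hx => hx.1
  | andR A B => exact fun x hx => hx.2
  | andI h1 h2 ih1 ih2 => exact fun x hx => ⟨ih1 x hx, ih2 x hx⟩
  | mono n h ih =>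
    rintro x ⟨v, h1, h2, h3⟩
    exact ⟨v, h1, h2, ih v h3⟩
  | trans n A =>
    rintro x ⟨v, h1, h2, u, g1, g2, g3⟩
    refine ⟨u, ?_, ?_, g3⟩
    · intro i hi; rw [g1 i hi, h1 i hi]
    · exact lt_trans (lt_of_lt_of_le g2 (le_of_eq rfl)) h2
  | @down m n A hmn =>
    intro x hx
    have H := (char (RCFormula.dia n A) x).1 hx
    have H1 : ∀ i, i < n → fV A i ≤ x.c i := by
      intro i hi
      have := H i
      simpa only [fV, if_pos hi] using this
    have H2 : gOf (fV A) (maxIdx A) n + 1 ≤ x.c n := by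
      have := H n
      simpa only [fV, if_neg (lt_irrefl n), if_pos rfl, if_true] using this
    refine (char (RCFormula.dia m A) x).2 ?_
    intro j
    show (if j < m then fV A j else if j = m then gOf (fV A) (maxIdx A) m + 1 else 0) ≤ x.c j
    by_cases hj : j < m
    · rw [if_pos hj]; exact H1 j (by omega)
    · by_cases hj' : j = m
      · rw [if_neg hj, if_pos hj']
        subst hj'
        exact down_chain x H1 H2 (n - j) j (by omega)
      · rw [if_neg hj, if_neg hj']; exact zero_le
  | @J m n A B hmn =>
    intro x hx
    have Hn := (char (RCFormula.dia n A) x).1 hx.1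
    have Hm := (char (RCFormula.dia m B) x).1 hx.2
    set C := RCFormula.and A (RCFormula.dia m B) with hC
    have hagree : ∀ i, n ≤ i → fV C i = fV A i := by
      intro i hi
      show max (fV A i) (fV (RCFormula.dia m B) i) = fV A i
      have : fV (RCFormula.dia m B) i = 0 := by
        show (if i < m then fV B i else if i = m then _ + 1 else 0) = 0
        rw [if_neg (by omega), if_neg (by omega)]
      rw [this]
      exact max_eq_left (zero_le)
    refine (char (RCFormula.dia n C) x).2 ?_
    intro j
    show (if j < n then fV C j else if j = n then gOf (fV C) (maxIdx C) n + 1 else 0) ≤ x.c j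
    by_cases hj : j < n
    · rw [if_pos hj]
      show max (fV A j) (fV (RCFormula.dia m B) j) ≤ x.c j
      refine max_le ?_ (Hm j)
      have := Hn j
      simpa only [fV, if_pos hj] using this
    · by_cases hj' : j = n
      · rw [if_neg hj, if_pos hj']
        subst hj'
        rw [g_eq_of_agree hagree]
        have := Hn j
        simpa only [fV, if_neg (lt_irrefl j), if_pos rfl, if_true] using this
      · rw [if_neg hj, if_neg hj']; exact zero_le

end RCIrr

/-- For every RC-formula A, A ⊬ ◇₀A; hence `<₀` is irreflexive. -/
theorem stmt_8 (A : RCFormula) : ¬ RCPrf A (.dia 0 A) := by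
  intro h
  have hgA : RCIrr.Sat A (RCIrr.gW A) :=
    (RCIrr.char A (RCIrr.gW A)).2 fun j => RCIrr.gOf_ge (RCIrr.fV_supp A) j
  obtain ⟨v, -, hlt, hv⟩ := RCIrr.sound h (RCIrr.gW A) hgA
  have hmin : RCIrr.gOf (RCIrr.fV A) (RCIrr.maxIdx A) 0 ≤ v.c 0 :=
    RCIrr.gOf_min v.c v.hE v.hdiv ((RCIrr.char A v).1 hv) 0
  exact absurd hlt (not_lt.2 hmin)
end

section
/- Let ℓ : Ordinal → Ordinal be defined by ℓ(0)=0 and ℓ(β)=γ when β = δ + ω^γ with ω^γ the last term of the Cantor normal form of β. Then the set I of sequences α : ℕ → Ordinal with αᵢ < ε₀ for all i and α_{i+1} ≤ ℓ(αᵢ) for all i, ordered by α ≤ β iff αₙ ≥ βₙ for all n, is a meet-semilattice: any two elements have a greatest lower bound. -/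
open Ordinal

/-- `ell β` is the exponent of the last (smallest) term of the Cantor normal
form of `β` (base ω), with `ell 0 = 0`. -/
noncomputable def ell (b : Ordinal) : Ordinal :=
  ((Ordinal.CNF omega0 b).map Prod.fst).getLastD 0

/-- `ε₀`, the least ordinal `α` with `ω ^ α = α`. -/
noncomputable def eps0 : Ordinal := Ordinal.nfp (fun a => omega0 ^ a) 0

/-- Membership in the Ignatiev set `I`: sequences of ordinals below `ε₀` with
`α (i+1) ≤ ℓ (α i)` for all `i`. -/
def IgMem (a : ℕ → Ordinal) : Prop :=
  (∀ i, a i < eps0) ∧ ∀ i, a (i + 1) ≤ ell (a i)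

/-! ### Auxiliary lemmas about `ell` -/

lemma ell_zero : ell 0 = 0 := by simp [ell, Ordinal.CNF.zero_right]

lemma ell_rec {β : Ordinal} (hβ : β ≠ 0) :
    ell β = if β % omega0 ^ Ordinal.log omega0 β = 0 then Ordinal.log omega0 β
            else ell (β % omega0 ^ Ordinal.log omega0 β) := by
  rw [ell, Ordinal.CNF.ne_zero hβ]
  split_ifs with h
  · simp [h, Ordinal.CNF.zero_right]
  · rw [List.map_cons, List.getLastD_cons, ell]
    have hne : (Ordinal.CNF omega0 (β % omega0 ^ Ordinal.log omega0 β)).map Prod.fst ≠ [] := by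
      rw [Ordinal.CNF.ne_zero h]; simp
    cases hl : (Ordinal.CNF omega0 (β % omega0 ^ Ordinal.log omega0 β)).map Prod.fst with
    | nil => exact absurd hl hne
    | cons x t => rw [List.getLastD_cons, List.getLastD_cons]

lemma ell_le_log (β : Ordinal) : ell β ≤ Ordinal.log omega0 β := by
  rw [ell]
  cases hl : (Ordinal.CNF omega0 β).map Prod.fst with
  | nil => simp [zero_le]
  | cons x t =>
    have hmem : (x :: t).getLastD 0 ∈ x :: t := by
      rw [List.getLastD_cons]; exact List.getLastD_mem_cons
    rw [← hl] at hmem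
    obtain ⟨p, hp, hpe⟩ := List.mem_map.1 hmem
    rw [← hl, ← hpe]
    exact Ordinal.CNF.fst_le_log hp

lemma opow_ell_dvd : ∀ β : Ordinal, β ≠ 0 → omega0 ^ ell β ∣ β := by
  intro β
  induction β using Ordinal.induction with
  | h β IH =>
    intro hβ
    rw [ell_rec hβ]
    have hdm : omega0 ^ Ordinal.log omega0 β * (β / omega0 ^ Ordinal.log omega0 β)
        + β % omega0 ^ Ordinal.log omega0 β = β := Ordinal.div_add_mod _ _
    split_ifs with h
    · rw [h, add_zero] at hdm
      exact ⟨_, hdm.symm⟩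
    · have hrlt : β % omega0 ^ Ordinal.log omega0 β < β :=
        Ordinal.mod_opow_log_lt_self omega0 hβ
      have hdvd := IH _ hrlt h
      have h1 : ell (β % omega0 ^ Ordinal.log omega0 β) ≤ Ordinal.log omega0 β :=
        (ell_le_log _).trans (Ordinal.log_mono_right _ hrlt.le)
      have h2 := (Ordinal.opow_dvd_opow omega0 h1).mul_right
        (β / omega0 ^ Ordinal.log omega0 β)
      calc omega0 ^ ell (β % omega0 ^ Ordinal.log omega0 β) ∣
            omega0 ^ Ordinal.log omega0 β * (β / omega0 ^ Ordinal.log omega0 β)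
            + β % omega0 ^ Ordinal.log omega0 β := dvd_add h2 hdvd
        _ = β := hdm

lemma le_ell_of_dvd : ∀ β : Ordinal, β ≠ 0 → ∀ γ, omega0 ^ γ ∣ β → γ ≤ ell β := by
  intro β
  induction β using Ordinal.induction with
  | h β IH =>
    intro hβ γ hdvd
    have hγlog : γ ≤ Ordinal.log omega0 β := by
      rw [← Ordinal.opow_le_iff_le_log one_lt_omega0 hβ]
      exact Ordinal.le_of_dvd hβ hdvd
    rw [ell_rec hβ]
    split_ifs with h
    · exact hγlog
    · have hrlt : β % omega0 ^ Ordinal.log omega0 β < β :=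
        Ordinal.mod_opow_log_lt_self omega0 hβ
      apply IH _ hrlt h
      obtain ⟨e, he⟩ := hdvd
      rw [Ordinal.mod_def]
      have hop : omega0 ^ Ordinal.log omega0 β
          = omega0 ^ γ * omega0 ^ (Ordinal.log omega0 β - γ) := by
        rw [← Ordinal.opow_add, Ordinal.add_sub_cancel_of_le hγlog]
      refine ⟨e - omega0 ^ (Ordinal.log omega0 β - γ) * (β / omega0 ^ Ordinal.log omega0 β), ?_⟩
      rw [Ordinal.mul_sub, ← he, ← mul_assoc, ← hop]

/-! ### Auxiliary lemmas about `eps0` -/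

lemma eps0_fix : omega0 ^ eps0 = eps0 :=
  Ordinal.nfp_fp (Ordinal.isNormal_opow one_lt_omega0) 0

lemma opow_lt_eps0 {γ : Ordinal} (h : γ < eps0) : omega0 ^ γ < eps0 := by
  conv_rhs => rw [← eps0_fix]
  exact (Ordinal.opow_lt_opow_iff_right one_lt_omega0).2 h

lemma not_opow_le_self {β : Ordinal} (h : β < eps0) : ¬ omega0 ^ β ≤ β := fun hle =>
  absurd (Ordinal.nfp_le_fp (Ordinal.isNormal_opow one_lt_omega0).monotone (zero_le (a := β)) hle)
    (not_le.2 h)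

lemma add_lt_eps0 {x y : Ordinal} (hx : x < eps0) (hy : y < eps0) : x + y < eps0 := by
  have := Ordinal.principal_add_omega0_opow eps0
  rw [eps0_fix] at this
  exact this hx hy

lemma mul_lt_eps0 {x y : Ordinal} (hx : x < eps0) (hy : y < eps0) : x * y < eps0 := by
  have := Ordinal.principal_mul_omega0_opow_opow eps0
  rw [eps0_fix, eps0_fix] at this
  exact this hx hy

lemma omega0_le_eps0 : omega0 ≤ eps0 := by
  have h := Ordinal.iterate_le_nfp (fun a => omega0 ^ a) 0 2
  simpa [eps0, Function.iterate_succ', Ordinal.opow_one] using h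

lemma one_lt_eps0 : 1 < eps0 := one_lt_omega0.trans_le omega0_le_eps0

lemma log_lt_self_of_lt_eps0 {β : Ordinal} (h0 : β ≠ 0) (h : β < eps0) :
    Ordinal.log omega0 β < β := by
  by_contra hc
  push_neg at hc
  exact not_opow_le_self h <| (Ordinal.opow_le_opow_right omega0_pos hc).trans
    (Ordinal.opow_log_le_self _ h0)

/-! ### The step function -/

open Classical in
/-- The least `β ≥ m` with `γ ≤ ell β`. -/
noncomputable def IgStep (m γ : Ordinal) : Ordinal :=
  if omega0 ^ γ ∣ m ∧ (m ≠ 0 ∨ γ = 0) then m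
  else omega0 ^ γ * (m / omega0 ^ γ + 1)

lemma le_igStep (m γ : Ordinal) : m ≤ IgStep m γ := by
  rw [IgStep]
  split_ifs with h
  · exact le_rfl
  · exact (Ordinal.lt_mul_succ_div m (Ordinal.opow_ne_zero γ omega0_ne_zero)).le

lemma le_ell_igStep (m γ : Ordinal) : γ ≤ ell (IgStep m γ) := by
  rw [IgStep]
  split_ifs with h
  · rcases h.2 with hm | hγ
    · exact le_ell_of_dvd m hm γ h.1
    · simp [hγ, zero_le]
  · refine le_ell_of_dvd _ ?_ _ ⟨_, rfl⟩
    exact _root_.mul_ne_zero (Ordinal.opow_ne_zero γ omega0_ne_zero)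
      (fun hc => Ordinal.succ_ne_zero (m / omega0 ^ γ) (by rwa [← Ordinal.add_one_eq_succ]))

lemma igStep_le {m γ d : Ordinal} (hm : m ≤ d) (hγ : γ ≤ ell d) : IgStep m γ ≤ d := by
  rcases eq_or_ne d 0 with rfl | hd
  · have hm0 : m = 0 := nonpos_iff_eq_zero.1 hm
    have hγ0 : γ = 0 := nonpos_iff_eq_zero.1 (by simpa [ell_zero] using hγ)
    simp [IgStep, hm0, hγ0]
  · have hdvd : omega0 ^ γ ∣ d := (Ordinal.opow_dvd_opow omega0 hγ).trans (opow_ell_dvd d hd)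
    rw [IgStep]
    split_ifs with h
    · exact hm
    · obtain ⟨e, he⟩ := hdvd
      have hq : m / omega0 ^ γ < e := by
        by_contra hc
        push_neg at hc
        have h1 : d ≤ omega0 ^ γ * (m / omega0 ^ γ) := by
          rw [he]; exact mul_le_mul_right hc _
        have h2 : omega0 ^ γ * (m / omega0 ^ γ) ≤ m := Ordinal.mul_div_le m _
        have hdm : d = m := le_antisymm (h1.trans h2) hm
        have hmne : m ≠ 0 := hdm ▸ hd
        exact h ⟨hdm ▸ ⟨e, he⟩, Or.inl hmne⟩
      rw [he]
      exact mul_le_mul_right (Order.add_one_le_of_lt hq) _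

lemma igStep_lt_eps0 {m γ : Ordinal} (hm : m < eps0) (hγ : γ < eps0) : IgStep m γ < eps0 := by
  rw [IgStep]
  split_ifs with h
  · exact hm
  · refine mul_lt_eps0 (opow_lt_eps0 hγ) (add_lt_eps0 ?_ one_lt_eps0)
    have : m / omega0 ^ γ ≤ m := by
      rw [Ordinal.div_le (Ordinal.opow_ne_zero γ omega0_ne_zero)]
      calc m < m + 1 := lt_add_one m
        _ = 1 * Order.succ m := by rw [one_mul, Order.succ_eq_add_one]
        _ ≤ omega0 ^ γ * Order.succ m :=
          mul_le_mul_left (Ordinal.one_le_iff_ne_zero.2 (Ordinal.opow_ne_zero γ omega0_ne_zero)) _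
    exact this.trans_lt hm

/-! ### Eventual vanishing -/

lemma igMem_eventually_zero {a : ℕ → Ordinal} (ha : IgMem a) :
    ∃ N, ∀ i, N ≤ i → a i = 0 := by
  have hz : ∃ N, a N = 0 := by
    by_contra hc
    push_neg at hc
    have hdesc : ∀ n, a (n + 1) < a n := fun n =>
      (ha.2 n).trans_lt ((ell_le_log _).trans_lt (log_lt_self_of_lt_eps0 (hc n) (ha.1 n)))
    exact (RelEmbedding.wellFounded_iff_isEmpty.1 Ordinal.lt_wf).false
      (RelEmbedding.natGT a hdesc)
  obtain ⟨N, hNz⟩ := hz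
  refine ⟨N, fun i hi => ?_⟩
  induction i, hi using Nat.le_induction with
  | base => exact hNz
  | succ i hi ih =>
    have h := ha.2 i
    rw [ih, ell_zero] at h
    exact nonpos_iff_eq_zero.1 h

/-! ### The meet construction -/

/-- Backwards recursion producing the meet. -/
noncomputable def IgD (m : ℕ → Ordinal) (N : ℕ) : ℕ → Ordinal
  | 0 => 0
  | (k+1) => IgStep (m (N - (k+1))) (IgD m N k)

/-- `(I, ≤)` with `α ≤ β` iff `∀ n, αₙ ≥ βₙ` is a meet-semilattice: any two
elements have a greatest lower bound. -/
theorem stmt_9 (a b : ℕ → Ordinal) (ha : IgMem a) (hb : IgMem b) :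
    ∃ c : ℕ → Ordinal, IgMem c ∧ (∀ n, a n ≤ c n) ∧ (∀ n, b n ≤ c n) ∧
      ∀ d : ℕ → Ordinal, IgMem d → (∀ n, a n ≤ d n) → (∀ n, b n ≤ d n) →
        ∀ n, c n ≤ d n := by
  obtain ⟨Na, hNa⟩ := igMem_eventually_zero ha
  obtain ⟨Nb, hNb⟩ := igMem_eventually_zero hb
  set N := max Na Nb with hNdef
  have hN : ∀ i, N ≤ i → a i = 0 ∧ b i = 0 := fun i hi =>
    ⟨hNa i (le_trans (le_max_left _ _) hi), hNb i (le_trans (le_max_right _ _) hi)⟩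
  set m : ℕ → Ordinal := fun i => max (a i) (b i) with hm
  set c : ℕ → Ordinal := fun i => IgD m N (N - i) with hc
  have hcge : ∀ i, N ≤ i → c i = 0 := by
    intro i hi
    show IgD m N (N - i) = 0
    rw [Nat.sub_eq_zero_of_le hi]
    rfl
  have hcrec : ∀ i, i < N → c i = IgStep (m i) (c (i + 1)) := by
    intro i hi
    show IgD m N (N - i) = IgStep (m i) (IgD m N (N - (i + 1)))
    have h1 : N - i = (N - (i + 1)) + 1 := by omega
    rw [h1, IgD]
    have h2 : N - (N - (i + 1) + 1) = i := by omega
    rw [h2]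
  have hmlt : ∀ i, m i < eps0 := fun i => max_lt (ha.1 i) (hb.1 i)
  have hDlt : ∀ k, IgD m N k < eps0 := by
    intro k
    induction k with
    | zero => exact lt_of_le_of_lt (zero_le (a := (1 : Ordinal))) one_lt_eps0
    | succ k ih => exact igStep_lt_eps0 (hmlt _) ih
  refine ⟨c, ⟨fun i => hDlt _, ?_⟩, ?_, ?_, ?_⟩
  · intro i
    rcases le_or_gt N i with hi | hi
    · rw [hcge (i + 1) (by omega)]
      exact zero_le
    · rw [hcrec i hi]
      exact le_ell_igStep _ _
  · intro n
    rcases le_or_gt N n with hn | hn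
    · rw [hcge n hn, (hN n hn).1]
    · rw [hcrec n hn]
      exact (le_max_left _ _).trans (le_igStep _ _)
  · intro n
    rcases le_or_gt N n with hn | hn
    · rw [hcge n hn, (hN n hn).2]
    · rw [hcrec n hn]
      exact (le_max_right _ _).trans (le_igStep _ _)
  · intro d hd hda hdb
    have key : ∀ k, ∀ i, N - i ≤ k → c i ≤ d i := by
      intro k
      induction k with
      | zero =>
        intro i hi
        rw [hcge i (by omega)]
        exact zero_le
      | succ k ih =>
        intro i hi
        rcases le_or_gt N i with h | h
        · rw [hcge i h]
          exact zero_le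
        · rw [hcrec i h]
          refine igStep_le (max_le (hda i) (hdb i)) ?_
          exact le_trans (ih (i + 1) (by omega)) (hd.2 i)
    intro n
    exact key (N - n) n le_rfl
end

section
/- If α is a point on the main axis of the Ignatiev frame (α_{i+1} = ℓ(αᵢ) for all i) and β = ◇ₙ(α), then C_β = Rₙ⁻¹(C_α): a point γ ∈ I satisfies γⱼ ≥ βⱼ for all j if and only if there exists δ ∈ I with γ Rₙ δ and δⱼ ≥ αⱼ for all j. -/
open Ordinal

/-- `diaSpec n a b` says that `b = ◇ₙ(a)`: `bᵢ = 0` for `i > n` and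
`bᵢ = aᵢ + ω ^ b_{i+1}` for `i ≤ n` (downward recursion, with `b (n+1) = 0`). -/
def diaSpec (n : ℕ) (a b : ℕ → Ordinal) : Prop :=
  (∀ i, n < i → b i = 0) ∧ ∀ i, i ≤ n → b i = a i + omega0 ^ b (i + 1)

/-- `Rrel i d g` : `d Rᵢ g` in the Ignatiev frame. -/
def Rrel (i : ℕ) (d g : ℕ → Ordinal) : Prop :=
  (∀ j, j < i → d j = g j) ∧ g i < d i

private lemma add_opow_eq (y e : Ordinal) :
    y + omega0 ^ e = omega0 ^ e * (y / omega0 ^ e + 1) := by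
  conv_lhs => rw [← Ordinal.div_add_mod y (omega0 ^ e)]
  rw [add_assoc, Ordinal.add_omega0_opow
      (Ordinal.mod_lt y (opow_ne_zero e omega0_ne_zero)), mul_add_one]

private lemma succ_mod_omega0_ne (s : Ordinal) : (s + 1) % omega0 ≠ 0 := by
  intro h
  obtain ⟨t, ht⟩ := Ordinal.dvd_of_mod_eq_zero h
  rcases eq_or_ne t 0 with rfl | ht0
  · rw [mul_zero, add_one_eq_succ, ← Ordinal.bot_eq_zero] at ht
    exact Order.succ_ne_bot s ht
  · have hl : Order.IsSuccLimit (omega0 * t) :=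
      isSuccLimit_mul_left isSuccLimit_omega0 (pos_iff_ne_zero.2 ht0)
    rw [← ht, add_one_eq_succ] at hl
    exact (lt_irrefl _ (hl.succ_lt (Order.lt_succ s)))

private lemma opow_mul_succ_inj {e f s t : Ordinal}
    (h : omega0 ^ e * (s + 1) = omega0 ^ f * (t + 1)) : e = f := by
  by_contra hne
  wlog hef : e < f generalizing e f s t
  · exact this h.symm (Ne.symm hne) ((Ne.lt_or_gt hne).resolve_left hef)
  have h1 : (omega0 ^ e * (s + 1)) % (omega0 ^ (e + 1)) = omega0 ^ e * ((s + 1) % omega0) := by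
    rw [show omega0 ^ (e + 1) = omega0 ^ e * omega0 by rw [opow_add, opow_one],
      Ordinal.mul_mod_mul]
  have h2 : (omega0 ^ f * (t + 1)) % (omega0 ^ (e + 1)) = 0 :=
    Ordinal.mod_eq_zero_of_dvd (dvd_mul_of_dvd_left
      (opow_dvd_opow _ (by rw [add_one_eq_succ]; exact Order.succ_le_of_lt hef)) _)
  rw [h, h2] at h1
  exact succ_mod_omega0_ne s
    ((mul_eq_zero.1 h1.symm).resolve_left (opow_ne_zero e omega0_ne_zero))

private lemma ell_repr : ∀ x : Ordinal, x ≠ 0 → ∃ s, x = omega0 ^ ell x * (s + 1) := by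
  intro x
  induction x using Ordinal.induction with
  | h x IH =>
  intro hx
  set L := log omega0 x with hL
  have hc : CNF omega0 x = (L, x / omega0 ^ L) :: CNF omega0 (x % omega0 ^ L) :=
    CNF.ne_zero hx
  rcases eq_or_ne (x % omega0 ^ L) 0 with hr | hr
  · have hell : ell x = L := by
      rw [ell, hc, hr, CNF.zero_right]; simp
    have hdiv : x = omega0 ^ L * (x / omega0 ^ L) := by
      conv_lhs => rw [← Ordinal.div_add_mod x (omega0 ^ L), hr, add_zero]
    have hlt : x / omega0 ^ L < omega0 := div_opow_log_lt x one_lt_omega0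
    obtain ⟨m, hm⟩ := lt_omega0.1 hlt
    have hm0 : m ≠ 0 := by
      rintro rfl
      rw [hm] at hdiv
      simp at hdiv
      exact hx hdiv
    obtain ⟨k, rfl⟩ := Nat.exists_eq_succ_of_ne_zero hm0
    refine ⟨(k : Ordinal), ?_⟩
    rw [hell, hdiv, hm]
    push_cast
    ring_nf
  · have hr_lt : x % omega0 ^ L < x := mod_opow_log_lt_self omega0 hx
    have hell : ell x = ell (x % omega0 ^ L) := by
      rw [ell, ell, hc, CNF.ne_zero hr]
      simp [List.getLastD_cons]
    obtain ⟨s, hs⟩ := IH _ hr_lt hr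
    rw [hell]
    refine ⟨(omega0 ^ L * (x / omega0 ^ L) + omega0 ^ ell (x % omega0 ^ L) * s) /
      omega0 ^ ell (x % omega0 ^ L), ?_⟩
    rw [← add_opow_eq]
    calc x = omega0 ^ L * (x / omega0 ^ L) + x % omega0 ^ L :=
              (Ordinal.div_add_mod _ _).symm
    _ = omega0 ^ L * (x / omega0 ^ L) +
          (omega0 ^ ell (x % omega0 ^ L) * s + omega0 ^ ell (x % omega0 ^ L)) := by
        rw [← mul_add_one, ← hs]
    _ = omega0 ^ L * (x / omega0 ^ L) + omega0 ^ ell (x % omega0 ^ L) * s +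
          omega0 ^ ell (x % omega0 ^ L) := by rw [add_assoc]

private lemma ell_add_opow (y e : Ordinal) : ell (y + omega0 ^ e) = e := by
  have hx : y + omega0 ^ e ≠ 0 :=
    ne_of_gt (lt_of_lt_of_le (opow_pos e omega0_pos) (le_add_self))
  obtain ⟨s, hs⟩ := ell_repr _ hx
  exact opow_mul_succ_inj (hs.symm.trans (add_opow_eq y e))

private lemma key_le {α x e : Ordinal} (hax : α ≤ x) (h1 : ell α < e) (h2 : e ≤ ell x) :
    α + omega0 ^ e ≤ x := by
  have hz : α + (x - α) = x := Ordinal.add_sub_cancel_of_le hax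
  rcases eq_or_ne (x - α) 0 with h0 | h0
  · exfalso
    rw [h0, add_zero] at hz
    rw [← hz] at h2
    exact absurd (h2.trans_lt h1) (lt_irrefl e)
  · obtain ⟨s, hs⟩ := ell_repr _ h0
    have hellx : ell x = ell (x - α) := by
      conv_lhs => rw [← hz, hs, mul_add_one, ← add_assoc]
      rw [ell_add_opow]
    have h3 : omega0 ^ e ≤ x - α := by
      refine le_trans (opow_le_opow_right omega0_pos (hellx ▸ h2)) ?_
      conv_rhs => rw [hs, mul_add_one]
      exact le_add_self
    calc α + omega0 ^ e ≤ α + (x - α) := add_le_add_right h3 α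
    _ = x := hz

/-- For `α` on the main axis and `β = ◇ₙ(α)`, `C_β = Rₙ⁻¹(C_α)`. -/
theorem stmt_12 (n : ℕ) (a b : ℕ → Ordinal) (ha : IgMem a)
    (axis : ∀ i, a (i + 1) = ell (a i)) (hb : diaSpec n a b) :
    ∀ g : ℕ → Ordinal, IgMem g →
      ((∀ j, b j ≤ g j) ↔
        ∃ d : ℕ → Ordinal, IgMem d ∧ Rrel n g d ∧ ∀ j, a j ≤ d j) := by
  intro g hg
  have hbn1 : b (n + 1) = 0 := hb.1 (n + 1) (Nat.lt_succ_self n)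
  have hbn : b n = a n + 1 := by rw [hb.2 n le_rfl, hbn1, opow_zero]
  constructor
  · intro hbg
    have hang : a n < g n := by
      calc a n < a n + 1 := lt_of_lt_of_le (Order.lt_succ (a n)) (by rw [add_one_eq_succ])
      _ = b n := hbn.symm
      _ ≤ g n := hbg n
    refine ⟨fun j => if j < n then g j else a j, ⟨?_, ?_⟩, ⟨?_, ?_⟩, ?_⟩
    · intro i; dsimp only; split
      · exact hg.1 i
      · exact ha.1 i
    · intro i; dsimp only
      by_cases h1 : i + 1 < n
      · rw [if_pos h1, if_pos (Nat.lt_of_succ_lt h1)]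
        exact hg.2 i
      · by_cases h2 : i < n
        · have hn : i + 1 = n := by omega
          rw [if_neg h1, if_pos h2]
          have h3 : a (i + 1) < g (i + 1) := by rw [hn]; exact hang
          exact le_of_lt (lt_of_lt_of_le h3 (hg.2 i))
        · rw [if_neg h1, if_neg h2, axis i]
    · intro j hj; dsimp only; rw [if_pos hj]
    · dsimp only; rw [if_neg (lt_irrefl n)]; exact hang
    · intro j; dsimp only; split
      · rename_i hj
        calc a j ≤ a j + omega0 ^ b (j + 1) := le_self_add
        _ = b j := (hb.2 j (le_of_lt hj)).symm
        _ ≤ g j := hbg j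
      · exact le_rfl
  · rintro ⟨d, _hd, ⟨hR1, hR2⟩, had⟩
    have aux : ∀ k, b (n - k) ≤ g (n - k) := by
      intro k
      induction k with
      | zero =>
        simp only [Nat.sub_zero]
        rw [hbn, add_one_eq_succ]
        exact Order.succ_le_of_lt (lt_of_le_of_lt (had n) hR2)
      | succ k IH =>
        by_cases hk : k < n
        · have hj1 : n - (k + 1) + 1 = n - k := by omega
          have hjn : n - (k + 1) < n := by omega
          rw [hb.2 _ (le_of_lt hjn)]
          apply key_le
          · calc a (n - (k + 1)) ≤ d (n - (k + 1)) := had _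
            _ = g (n - (k + 1)) := (hR1 _ hjn).symm
          · rw [← axis (n - (k + 1)), hb.2 _ (by omega)]
            exact lt_add_of_pos_right _ (opow_pos _ omega0_pos)
          · calc b (n - (k + 1) + 1) ≤ g (n - (k + 1) + 1) := by rw [hj1]; exact IH
            _ ≤ ell (g (n - (k + 1))) := hg.2 _
        · have h : n - (k + 1) = n - k := by omega
          rw [h]; exact IH
    intro j
    by_cases hj : j ≤ n
    · have h : j = n - (n - j) := by omega
      rw [h]; exact aux _
    · rw [hb.1 j (by omega)]
      exact zero_le
end
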